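/- Let a be a prime number and p an integer such that p ≢ 0 (mod a), p ≢ −2a+1 (mod a²), and p ≢ −2a−1 (mod a²). Then for every positive integer r, the polynomial a·t^{2r} + (2a+p)·t^r + a is irreducible in ℚ[t]. -/

import Mathlib

open Polynomial

/-- Let `a` be a prime and `p` an integer with `p ≢ 0 (mod a)`,
`p ≢ -2a+1 (mod a²)` and `p ≢ -2a-1 (mod a²)`.  Then for every positive integer `r`
the polynomial `a·t^{2r} + (2a+p)·t^r + a` is irreducible in `ℚ[t]`. -/
lemma key (a : ℕ) (ha : a.Prime) (p : ℤ) (hap : ¬ (a:ℤ) ∣ p)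
    (r : ℕ) (hr : 0 < r) (G H : Polynomial ℤ)
    (hF : C (a:ℤ) * X ^ (2*r) + C (2*(a:ℤ)+p) * X ^ r + C (a:ℤ) = G * H)
    (hG1 : 1 ≤ G.natDegree) (hH1 : 1 ≤ H.natDegree)
    (hlead : IsUnit G.leadingCoeff) :
    (a:ℤ)^2 ∣ (2*(a:ℤ) + p - 1) ∨ (a:ℤ)^2 ∣ (2*(a:ℤ) + p + 1) := by
  haveI : Fact a.Prime := ⟨ha⟩
  have ha0 : (a:ℤ) ≠ 0 := by exact_mod_cast ha.ne_zero
  set φ := Polynomial.mapRingHom (Int.castRingHom (ZMod a)) with hφ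
  have hpbar : ((p : ZMod a)) ≠ 0 := by
    rw [Ne, ZMod.intCast_zmod_eq_zero_iff_dvd]; exact hap
  -- image of F
  have hφF : φ (G * H) = C ((p : ZMod a)) * X ^ r := by
    rw [← hF]
    simp only [hφ, map_add, map_mul, map_pow, coe_mapRingHom, map_C, map_X]
    have h1 : ((a:ℤ) : ZMod a) = 0 := by
      rw [ZMod.intCast_zmod_eq_zero_iff_dvd]
    simp only [eq_intCast, Int.cast_natCast, Int.cast_ofNat, h1, map_zero, C_0,
      zero_mul, add_zero, zero_add, Int.cast_two, Int.cast_mul]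
    ring
  rw [map_mul] at hφF
  -- nonvanishing
  have hXr : (X : (ZMod a)[X]) ^ r ≠ 0 := pow_ne_zero _ X_ne_zero
  have hrhs : C ((p : ZMod a)) * X ^ r ≠ 0 := mul_ne_zero (by simpa only [Ne, C_eq_zero] using hpbar) hXr
  have hφG0 : φ G ≠ 0 := fun h => hrhs (by rw [← hφF, h, zero_mul])
  have hφH0 : φ H ≠ 0 := fun h => hrhs (by rw [← hφF, h, mul_zero])
  -- φ G divides X ^ r
  have hCu : IsUnit (C ((p : ZMod a))) := isUnit_C.mpr (isUnit_iff_ne_zero.mpr hpbar)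
  have hGdvd : φ G ∣ X ^ r := (hCu.dvd_mul_left).mp ⟨φ H, hφF.symm⟩
  have hHdvd : φ H ∣ X ^ r := (hCu.dvd_mul_left).mp ⟨φ G, by rw [← hφF, mul_comm]⟩
  obtain ⟨m, hmr, hmassoc⟩ := (dvd_prime_pow prime_X r).mp hGdvd
  obtain ⟨n, hnr, hnassoc⟩ := (dvd_prime_pow prime_X r).mp hHdvd
  -- get explicit forms
  obtain ⟨c, hc, hcG⟩ : ∃ c : ZMod a, c ≠ 0 ∧ φ G = C c * X ^ m := by
    obtain ⟨u, hu⟩ := hmassoc.symm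
    obtain ⟨c, hc, hcu⟩ := isUnit_iff.mp u.isUnit
    exact ⟨c, hc.ne_zero, by rw [← hu, hcu]; ring⟩
  obtain ⟨d, hd, hdH⟩ : ∃ d : ZMod a, d ≠ 0 ∧ φ H = C d * X ^ n := by
    obtain ⟨u, hu⟩ := hnassoc.symm
    obtain ⟨c, hc, hcu⟩ := isUnit_iff.mp u.isUnit
    exact ⟨c, hc.ne_zero, by rw [← hu, hcu]; ring⟩
  -- m + n = r
  have hmn : m + n = r := by
    have := hφF
    rw [hcG, hdH] at this
    have h2 : (C (c*d) : (ZMod a)[X]) * X ^ (m+n) = C ((p:ZMod a)) * X ^ r := by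
      rw [← this, C_mul]; ring
    have h3 := congrArg natDegree h2
    rwa [natDegree_C_mul_X_pow _ _ (mul_ne_zero hc hd),
      natDegree_C_mul_X_pow _ _ hpbar] at h3
  -- coefficient divisibility
  have hGco : ∀ i, i ≠ m → (a:ℤ) ∣ G.coeff i := by
    intro i him
    rw [← ZMod.intCast_zmod_eq_zero_iff_dvd]
    have : (φ G).coeff i = 0 := by rw [hcG]; simp [coeff_C_mul, coeff_X_pow, him]
    simpa [hφ, coeff_map] using this
  have hHco : ∀ j, j ≠ n → (a:ℤ) ∣ H.coeff j := by
    intro j hjn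
    rw [← ZMod.intCast_zmod_eq_zero_iff_dvd]
    have : (φ H).coeff j = 0 := by rw [hdH]; simp [coeff_C_mul, coeff_X_pow, hjn]
    simpa [hφ, coeff_map] using this
  -- leading coefficient of G is ±1, not divisible by a
  have hu := Int.isUnit_iff.mp hlead
  have hna : ¬ (a:ℤ) ∣ G.coeff G.natDegree := by
    rw [← leadingCoeff]
    rcases hu with h | h <;> rw [h] <;> intro hdvd
    · exact ha.one_lt.ne' (by exact_mod_cast Int.eq_one_of_dvd_one (by positivity) hdvd)
    · rw [dvd_neg] at hdvd
      exact ha.one_lt.ne' (by exact_mod_cast Int.eq_one_of_dvd_one (by positivity) hdvd)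
  have hmdeg : m = G.natDegree := by
    by_contra h
    exact hna (hGco _ (fun hh => h hh.symm))
  have hm1 : 1 ≤ m := hmdeg ▸ hG1
  -- constant coefficients
  have hc0 : G.coeff 0 * H.coeff 0 = (a:ℤ) := by
    have := congrArg (fun q => Polynomial.coeff q 0) hF
    simp only [coeff_add, coeff_C_mul, coeff_X_pow, coeff_C, mul_coeff_zero] at this
    rw [← this]
    have h2r : ¬ (0 = 2*r) := by omega
    have hr' : ¬ (0 = r) := by omega
    simp [h2r, hr', if_neg]
  obtain ⟨k, hk⟩ := hGco 0 (by omega)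
  have hkH : k * H.coeff 0 = 1 := by
    have : (a:ℤ) * (k * H.coeff 0) = (a:ℤ) * 1 := by
      rw [mul_one, ← mul_assoc, ← hk, hc0]
    exact mul_left_cancel₀ ha0 this
  have hH0unit : H.coeff 0 = 1 ∨ H.coeff 0 = -1 :=
    Int.isUnit_iff.mp (IsUnit.of_mul_eq_one _ (by rw [mul_comm] at hkH; exact hkH))
  have hnaH : ¬ (a:ℤ) ∣ H.coeff 0 := by
    rcases hH0unit with h | h <;> rw [h] <;> intro hdvd
    · exact ha.one_lt.ne' (by exact_mod_cast Int.eq_one_of_dvd_one (by positivity) hdvd)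
    · rw [dvd_neg] at hdvd
      exact ha.one_lt.ne' (by exact_mod_cast Int.eq_one_of_dvd_one (by positivity) hdvd)
  have hn0 : n = 0 := by
    by_contra h
    exact hnaH (hHco _ (fun hh => h hh.symm))
  have hmr' : m = r := by omega
  -- middle coefficient
  have hcr : 2*(a:ℤ) + p = ∑ x ∈ Finset.HasAntidiagonal.antidiagonal r, G.coeff x.1 * H.coeff x.2 := by
    have := congrArg (fun q => Polynomial.coeff q r) hF
    simp only [coeff_add, coeff_C_mul, coeff_X_pow, coeff_C] at this
    rw [coeff_mul] at this
    rw [← this]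
    have h2r : ¬ (r = 2*r) := by omega
    have hr' : ¬ (r = 0) := by omega
    simp [h2r, hr', if_neg]
  have hmem : ((r, 0) : ℕ × ℕ) ∈ Finset.HasAntidiagonal.antidiagonal r := by
    simp [Finset.HasAntidiagonal.mem_antidiagonal]
  have hsplit : ∑ x ∈ Finset.HasAntidiagonal.antidiagonal r, G.coeff x.1 * H.coeff x.2
      = G.coeff r * H.coeff 0
        + ∑ x ∈ (Finset.HasAntidiagonal.antidiagonal r).erase (r, 0), G.coeff x.1 * H.coeff x.2 :=
    (Finset.add_sum_erase _ _ hmem).symm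
  have hdvdsum : (a:ℤ)^2 ∣ ∑ x ∈ (Finset.HasAntidiagonal.antidiagonal r).erase (r, 0),
      G.coeff x.1 * H.coeff x.2 := by
    apply Finset.dvd_sum
    intro x hx
    obtain ⟨hne, hxmem⟩ := Finset.mem_erase.mp hx
    have hxsum : x.1 + x.2 = r := Finset.HasAntidiagonal.mem_antidiagonal.mp hxmem
    have hx1 : x.1 ≠ m := by
      intro h; apply hne
      have : x.2 = 0 := by omega
      exact Prod.ext (by omega) this
    have hx2 : x.2 ≠ n := by
      intro h; apply hne
      exact Prod.ext (by omega) (by omega)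
    rw [sq]
    exact mul_dvd_mul (hGco _ hx1) (hHco _ hx2)
  -- G.coeff r = leadingCoeff G
  have hGr : G.coeff r = G.leadingCoeff := by rw [leadingCoeff, ← hmdeg, hmr']
  obtain ⟨K, hK⟩ := hdvdsum
  have hfinal : 2*(a:ℤ) + p = G.leadingCoeff * H.coeff 0 + (a:ℤ)^2 * K := by
    rw [hcr, hsplit, hGr, hK]
  rcases hu with h | h <;> rcases hH0unit with h' | h'
  · left; exact ⟨K, by rw [hfinal, h, h']; ring⟩
  · right; exact ⟨K, by rw [hfinal, h, h']; ring⟩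
  · right; exact ⟨K, by rw [hfinal, h, h']; ring⟩
  · left; exact ⟨K, by rw [hfinal, h, h']; ring⟩

theorem polynomial_for_torsion_neg_t_irreducible
    (a : ℕ) (ha : a.Prime) (p : ℤ)
    (h0 : ¬ (p ≡ 0 [ZMOD (a : ℤ)]))
    (h1 : ¬ (p ≡ -2 * (a : ℤ) + 1 [ZMOD ((a : ℤ) ^ 2)]))
    (h2 : ¬ (p ≡ -2 * (a : ℤ) - 1 [ZMOD ((a : ℤ) ^ 2)])) :
    ∀ r : ℕ, 0 < r →
      Irreducible (C (a : ℚ) * X ^ (2 * r) + C (2 * (a : ℚ) + (p : ℚ)) * X ^ r + C (a : ℚ)) := by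
  intro r hr
  have hap : ¬ (a:ℤ) ∣ p := fun hd => h0 (Int.modEq_zero_iff_dvd.mpr hd)
  have hprime : Prime (a:ℤ) := Nat.prime_iff_prime_int.mp ha
  have ha0 : (a:ℤ) ≠ 0 := by exact_mod_cast ha.ne_zero
  set Fz : Polynomial ℤ := C (a:ℤ) * X ^ (2*r) + C (2*(a:ℤ)+p) * X ^ r + C (a:ℤ) with hFz
  -- coefficients of Fz
  have hco0 : Fz.coeff 0 = (a:ℤ) := by
    rw [hFz, coeff_add, coeff_add, coeff_C_mul, coeff_C_mul, coeff_X_pow, coeff_X_pow, coeff_C]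
    rw [if_neg (by omega : ¬ (0 = 2*r)), if_neg (by omega : ¬ (0 = r)), if_pos rfl]
    ring
  have hcor : Fz.coeff r = 2*(a:ℤ)+p := by
    rw [hFz, coeff_add, coeff_add, coeff_C_mul, coeff_C_mul, coeff_X_pow, coeff_X_pow, coeff_C]
    rw [if_neg (by omega : ¬ (r = 2*r)), if_neg (by omega : ¬ (r = 0)), if_pos rfl]
    ring
  have hco2r : Fz.coeff (2*r) = (a:ℤ) := by
    rw [hFz, coeff_add, coeff_add, coeff_C_mul, coeff_C_mul, coeff_X_pow, coeff_X_pow, coeff_C]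
    rw [if_neg (by omega : ¬ (2*r = r)), if_neg (by omega : ¬ (2*r = 0)), if_pos rfl]
    ring
  have hdeg : Fz.natDegree = 2*r := by
    have hle : Fz.natDegree ≤ 2*r := by
      rw [hFz]
      compute_degree
      all_goals omega
    exact le_antisymm hle (le_natDegree_of_ne_zero (hco2r ▸ ha0))
  have hlcF : Fz.leadingCoeff = (a:ℤ) := by
    rw [leadingCoeff, hdeg, hco2r]
  -- primitivity
  have hprim : Fz.IsPrimitive := by
    intro c hc
    rw [C_dvd_iff_dvd_coeff] at hc
    have hca : c ∣ (a:ℤ) := hco0 ▸ hc 0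
    have hcp : c ∣ 2*(a:ℤ)+p := hcor ▸ hc r
    obtain ⟨s, hs⟩ := hca
    rcases hprime.irreducible.isUnit_or_isUnit hs with h | h
    · exact h
    · exfalso
      apply hap
      have hadvdc : (a:ℤ) ∣ c := by
        rcases Int.isUnit_iff.mp h with h' | h' <;> rw [h'] at hs
        · exact ⟨1, by omega⟩
        · exact ⟨-1, by omega⟩
      have h3 : (a:ℤ) ∣ 2*(a:ℤ)+p := hadvdc.trans hcp
      have h4 := dvd_sub h3 (⟨2, by ring⟩ : (a:ℤ) ∣ 2*(a:ℤ))
      have h5 : 2*(a:ℤ)+p - 2*(a:ℤ) = p := by ring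
      rwa [h5] at h4
  -- irreducibility over ℤ
  have hirr : Irreducible Fz := by
    constructor
    · intro hunit
      have := natDegree_eq_zero_of_isUnit hunit
      omega
    · intro G H hGH
      by_contra hcon
      push_neg at hcon
      obtain ⟨hG, hH⟩ := hcon
      have hGd : 1 ≤ G.natDegree := by
        rcases Nat.eq_zero_or_pos G.natDegree with h | h
        · exfalso
          obtain ⟨g, hg⟩ := natDegree_eq_zero.mp h
          apply hG
          rw [← hg]
          exact isUnit_C.mpr (hprim g (⟨H, by rw [hGH, ← hg]⟩))
        · exact h
      have hHd : 1 ≤ H.natDegree := by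
        rcases Nat.eq_zero_or_pos H.natDegree with h | h
        · exfalso
          obtain ⟨g, hg⟩ := natDegree_eq_zero.mp h
          apply hH
          rw [← hg]
          exact isUnit_C.mpr (hprim g (⟨G, by rw [hGH, ← hg, mul_comm]⟩))
        · exact h
      have hl : G.leadingCoeff * H.leadingCoeff = (a:ℤ) := by
        rw [← leadingCoeff_mul, ← hGH, hlcF]
      have hdvd : (a:ℤ)^2 ∣ (2*(a:ℤ) + p - 1) ∨ (a:ℤ)^2 ∣ (2*(a:ℤ) + p + 1) := by
        rcases hprime.irreducible.isUnit_or_isUnit hl.symm with h | h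
        · exact key a ha p hap r hr G H hGH hGd hHd h
        · exact key a ha p hap r hr H G (by rw [← hFz, hGH]; ring) hHd hGd h
      rcases hdvd with hd | hd
      · apply h1
        rw [Int.modEq_iff_dvd]
        have : (-2*(a:ℤ)+1) - p = -(2*(a:ℤ)+p-1) := by ring
        rw [this]
        exact dvd_neg.mpr hd
      · apply h2
        rw [Int.modEq_iff_dvd]
        have : (-2*(a:ℤ)-1) - p = -(2*(a:ℤ)+p+1) := by ring
        rw [this]
        exact dvd_neg.mpr hd
  -- transfer to ℚ
  have hmap : Fz.map (Int.castRingHom ℚ)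
      = C (a : ℚ) * X ^ (2 * r) + C (2 * (a : ℚ) + (p : ℚ)) * X ^ r + C (a : ℚ) := by
    simp only [hFz, Polynomial.map_add, Polynomial.map_mul, Polynomial.map_pow, map_C, map_X]
    simp only [eq_intCast]
    push_cast
    ring
  rw [← hmap]
  exact (Polynomial.IsPrimitive.Int.irreducible_iff_irreducible_map_cast hprim).mp hirr
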